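/- Let w ∈ S_n avoid the patterns 3412 and 4231, and let λ be a partition of n having α_i parts equal to i for each i; set z_λ = ∏_i i^{α_i}·α_i!. Then the number of cylindrical F_w-tableaux of shape λ equals z_λ times the number of permutations v ∈ S_n of cycle type λ such that some path family of type v covers F_w (equivalently, such that v ≤ w in Bruhat order). -/

import Mathlib

namespace ZigZag

noncomputable section

attribute [local instance] Classical.propDecidable

/-- Vertices of a network of order `n` built from `t` stars:
sources, sinks and central vertices. -/
inductive V (n t : ℕ) : Type
  | src : Fin n → V n t
  | snk : Fin n → V n t
  | ctr : Fin t → V n t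
  deriving DecidableEq

/-- Data of a concatenation `G_{[c 0, d 0]} ∘ ⋯ ∘ G_{[c (t-1), d (t-1)]}` of star
networks of order `n`: pairwise distinct, pairwise non-nesting intervals
satisfying the triple-overlap condition. -/
structure IntervalData (n t : ℕ) : Type where
  c : Fin t → Fin n
  d : Fin t → Fin n
  cd_le : ∀ k, c k ≤ d k
  nonnest : ∀ k l : Fin t, k ≠ l → ¬ (c k ≤ c l ∧ d l ≤ d k)
  tripleOverlap : ∀ k l m : Fin t, k < l → l < m →
    (c k ≤ d l ∧ c l ≤ d k) → (c l ≤ d m ∧ c m ≤ d l) →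
    (c k < c l ∧ c l < c m) ∨ (c m < c l ∧ c l < c k)

variable {n t : ℕ}

/-- `i` belongs to the `k`-th interval `[c k, d k]`. -/
def IntervalData.mem (D : IntervalData n t) (k : Fin t) (i : Fin n) : Prop :=
  D.c k ≤ i ∧ i ≤ D.d k

/-- Edges of the zig-zag network associated to `D` (collapsing the parallel
central edges, i.e. keeping one path per covering pair). -/
inductive Edge (D : IntervalData n t) : V n t → V n t → Prop
  | srcCtr (i : Fin n) (k : Fin t) : D.mem k i → (∀ l, l < k → ¬ D.mem l i) →
      Edge D (V.src i) (V.ctr k)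
  | ctrSnk (i : Fin n) (k : Fin t) : D.mem k i → (∀ l, k < l → ¬ D.mem l i) →
      Edge D (V.ctr k) (V.snk i)
  | srcSnk (i : Fin n) : (∀ k, ¬ D.mem k i) → Edge D (V.src i) (V.snk i)
  | ctrCtr (i : Fin n) (k l : Fin t) : k < l → D.mem k i → D.mem l i →
      (∀ m, k < m → m < l → ¬ D.mem m i) → Edge D (V.ctr k) (V.ctr l)

/-- A directed path (a nonempty list of successively adjacent vertices)
from `x` to `y` in the digraph with edge relation `E`. -/
def PathIn (E : V n t → V n t → Prop) (p : List (V n t)) (x y : V n t) : Prop :=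
  p ≠ [] ∧ p.Chain' E ∧ p.head? = some x ∧ p.getLast? = some y

/-- A directed path from source `i` to sink `j` in the zig-zag network of `D`. -/
def IsPathFromTo (D : IntervalData n t) (p : List (V n t)) (i j : Fin n) : Prop :=
  PathIn (Edge D) p (V.src i) (V.snk j)

/-- The intervals `[c k, d k]` and `[c l, d l]` intersect. -/
def Intersects (D : IntervalData n t) (k l : Fin t) : Prop :=
  D.c k ≤ D.d l ∧ D.c l ≤ D.d k

/-- The covering relation `⋖` on the intervals of the concatenation. -/
def Cov (D : IntervalData n t) (k l : Fin t) : Prop :=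
  k < l ∧ Intersects D k l ∧
    ∀ m, k < m → m < l → ∀ i : Fin n, ¬ (D.mem k i ∧ D.mem l i ∧ D.mem m i)

/-- The strict partial order `≺` generated by the covering relation. -/
def Prec (D : IntervalData n t) : Fin t → Fin t → Prop :=
  Relation.TransGen (Cov D)

/-- A path family of type `v`: the `i`-th path runs from source `i` to sink `v i`. -/
def IsFamilyOfType (D : IntervalData n t) (fam : Fin n → List (V n t))
    (v : Equiv.Perm (Fin n)) : Prop :=
  ∀ i, IsPathFromTo D (fam i) i (v i)

/-- The path family covers the network: every edge lies on some path. -/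
def Covers (D : IntervalData n t) (fam : Fin n → List (V n t)) : Prop :=
  ∀ x y, Edge D x y → ∃ i, [x, y] <:+: fam i

/-- Bruhat order on `S_n`. -/
def BruhatLE (v w : Equiv.Perm (Fin n)) : Prop :=
  ∀ i j : Fin n,
    (Finset.univ.filter fun k : Fin n => k ≤ i ∧ j ≤ v k).card ≤
      (Finset.univ.filter fun k : Fin n => k ≤ i ∧ j ≤ w k).card

/-- `D` is interval data for the zig-zag network `F_w`: a path family of type `v`
covers it iff `v ≤ w` in Bruhat order, and such families are unique. -/
def Represents (D : IntervalData n t) (w : Equiv.Perm (Fin n)) : Prop :=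
  ∀ v : Equiv.Perm (Fin n),
    ((∃ fam, IsFamilyOfType D fam v ∧ Covers D fam) ↔ BruhatLE v w) ∧
    ∀ fam fam', IsFamilyOfType D fam v → Covers D fam →
      IsFamilyOfType D fam' v → Covers D fam' → fam = fam'

def Avoids3412 (w : Equiv.Perm (Fin n)) : Prop :=
  ¬ ∃ i1 i2 i3 i4 : Fin n, i1 < i2 ∧ i2 < i3 ∧ i3 < i4 ∧
    w i3 < w i4 ∧ w i4 < w i1 ∧ w i1 < w i2

def Avoids4231 (w : Equiv.Perm (Fin n)) : Prop :=
  ¬ ∃ i1 i2 i3 i4 : Fin n, i1 < i2 ∧ i2 < i3 ∧ i3 < i4 ∧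
    w i4 < w i2 ∧ w i2 < w i3 ∧ w i3 < w i1

def Avoids312 (w : Equiv.Perm (Fin n)) : Prop :=
  ¬ ∃ i1 i2 i3 : Fin n, i1 < i2 ∧ i2 < i3 ∧ w i2 < w i3 ∧ w i3 < w i1

/-- The source-`i`-to-sink-`i` and source-`j`-to-sink-`j` paths share a vertex. -/
def PathsIntersect (D : IntervalData n t) (i j : Fin n) : Prop :=
  ∃ p q, IsPathFromTo D p i i ∧ IsPathFromTo D q j j ∧ ∃ x, x ∈ p ∧ x ∈ q

/-- The strict order of the poset `P(F)`. -/
def PRel (D : IntervalData n t) (i j : Fin n) : Prop :=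
  i < j ∧ ¬ PathsIntersect D i j

/-- Descending star network: `c 0 > c 1 > ⋯`. -/
def Descending (D : IntervalData n t) : Prop :=
  ∀ k l : Fin t, k < l → D.c l < D.c k

/-- Incomparability for a strict order. -/
def Incomp {α : Type*} (r : α → α → Prop) (x y : α) : Prop :=
  x ≠ y ∧ ¬ r x y ∧ ¬ r y x

/-- A strict order is a unit interval order if it is (3+1)-free and (2+2)-free. -/
def UnitIntervalOrder {α : Type*} (r : α → α → Prop) : Prop :=
  (¬ ∃ a b c x, r a b ∧ r b c ∧ Incomp r x a ∧ Incomp r x b ∧ Incomp r x c) ∧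
  (¬ ∃ a b x y, r a b ∧ r x y ∧ Incomp r a x ∧ Incomp r a y ∧
      Incomp r b x ∧ Incomp r b y)

/-- `lam` is a partition of `n`. -/
def IsPartition (lam : List ℕ) (n : ℕ) : Prop :=
  lam.Pairwise (· ≥ ·) ∧ (∀ x ∈ lam, 0 < x) ∧ lam.sum = n

/-- An `F`-tableau of shape `lam` (French notation): a covering path family
together with an arrangement of the `n` source indices into rows of
lengths `lam`. -/
structure Tableau (D : IntervalData n t) (lam : List ℕ) : Type where
  fam : Fin n → List (V n t)
  typ : Equiv.Perm (Fin n)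
  isFam : IsFamilyOfType D fam typ
  covers : Covers D fam
  rows : List (List (Fin n))
  shape : rows.map List.length = lam
  nodup : rows.flatten.Nodup
  complete : ∀ i : Fin n, i ∈ rows.flatten

namespace Tableau

variable {D : IntervalData n t} {lam : List ℕ}

/-- The paths indexed by `a` and `b` share a vertex. -/
def Intersect (U : Tableau D lam) (a b : Fin n) : Prop :=
  ∃ x, x ∈ U.fam a ∧ x ∈ U.fam b

def RowClosed (U : Tableau D lam) : Prop :=
  ∀ r ∈ U.rows, (r.map ⇑U.typ).Perm r

def LeftRowStrict (U : Tableau D lam) : Prop :=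
  ∀ r ∈ U.rows, r.Chain' (· < ·)

def RowSemistrict (U : Tableau D lam) : Prop :=
  ∀ r ∈ U.rows, r.Chain' fun a b => ¬ (b < a ∧ ¬ U.Intersect a b)

def CycRowSemistrict (U : Tableau D lam) : Prop :=
  U.RowSemistrict ∧ ∀ r ∈ U.rows, ∀ a b : Fin n,
    r.getLast? = some a → r.head? = some b → ¬ (b < a ∧ ¬ U.Intersect a b)

def RowStrict (U : Tableau D lam) : Prop :=
  ∀ r ∈ U.rows, r.Chain' fun a b => a < b ∧ ¬ U.Intersect a b

def RightAnchored (U : Tableau D lam) : Prop :=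
  ∀ r ∈ U.rows, ∀ a : Fin n, r.getLast? = some a → ∀ b ∈ r, a ≤ b

def LeftAnchored (U : Tableau D lam) : Prop :=
  ∀ r ∈ U.rows, ∀ a : Fin n, r.head? = some a → ∀ b ∈ r, a ≤ b

def Cylindrical (U : Tableau D lam) : Prop :=
  ∀ r ∈ U.rows, r.map ⇑U.typ = r.rotate 1

def TypeE (U : Tableau D lam) : Prop := U.typ = 1

/-- `inv (U_1 ∘ ⋯ ∘ U_r)`: inversions of the concatenation of the rows. -/
def invConcat (U : Tableau D lam) : ℕ :=
  Set.ncard {p : Fin U.rows.flatten.length × Fin U.rows.flatten.length |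
    p.1 < p.2 ∧ U.Intersect (U.rows.flatten.get p.1) (U.rows.flatten.get p.2) ∧
      U.rows.flatten.get p.2 < U.rows.flatten.get p.1}

/-- `inv (U^R)` for a one-rowed tableau `U`. -/
def invR (U : Tableau D lam) : ℕ :=
  Set.ncard {p : Fin U.rows.flatten.length × Fin U.rows.flatten.length |
    p.1 < p.2 ∧ U.Intersect (U.rows.flatten.get p.1) (U.rows.flatten.get p.2) ∧
      U.rows.flatten.get p.1 < U.rows.flatten.get p.2}

/-- `rinv` of a single row `r`. -/
def rinvRow (U : Tableau D lam) (r : List (Fin n)) : ℕ :=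
  Set.ncard {p : Fin r.length × Fin r.length |
    p.1 < p.2 ∧ U.Intersect (r.get p.1) (r.get p.2) ∧
      U.typ (r.get p.2) < U.typ (r.get p.1)}

/-- `rinv (U_1) + ⋯ + rinv (U_r)`. -/
def rinvRowsSum (U : Tableau D lam) : ℕ := (U.rows.map U.rinvRow).sum

/-- `inv (U^tr)`: inversions between entries of distinct rows. -/
def invTr (U : Tableau D lam) : ℕ :=
  Set.ncard {p : Fin n × Fin n |
    (∃ j1 j2 : ℕ, j1 < j2 ∧ p.1 ∈ U.rows.getD j1 [] ∧ p.2 ∈ U.rows.getD j2 []) ∧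
      U.Intersect p.1 p.2 ∧ p.2 < p.1}

/-- `rinv (U^tr)`: right inversions between entries of distinct rows. -/
def rinvTr (U : Tableau D lam) : ℕ :=
  Set.ncard {p : Fin n × Fin n |
    (∃ j1 j2 : ℕ, j1 < j2 ∧ p.1 ∈ U.rows.getD j1 [] ∧ p.2 ∈ U.rows.getD j2 []) ∧
      U.Intersect p.1 p.2 ∧ U.typ p.2 < U.typ p.1}

end Tableau

/-- Row `j` of `U` has entry set `I j`. -/
def RowContents {D : IntervalData n t} {lam : List ℕ} (U : Tableau D lam)
    (I : Fin lam.length → Finset (Fin n)) : Prop :=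
  ∀ j : Fin lam.length, (U.rows.getD (j : ℕ) []).toFinset = I j

/-- `[a]_q = 1 + q + ⋯ + q^(a-1)`. -/
noncomputable def qNat (a : ℕ) : Polynomial ℤ := ∑ i ∈ Finset.range a, Polynomial.X ^ i

/-- `[a]_q! = [a]_q [a-1]_q ⋯ [1]_q`. -/
noncomputable def qFact (a : ℕ) : Polynomial ℤ := ∏ i ∈ Finset.range a, qNat (i + 1)

/-- The network is connected as an (undirected) graph. -/
def Connected (D : IntervalData n t) : Prop :=
  ∀ x y : V n t, Relation.ReflTransGen (fun a b => Edge D a b ∨ Edge D b a) x y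

noncomputable def Onum (D : IntervalData n t) : Polynomial ℤ :=
  ∏ k : Fin t, qFact ((D.d k : ℕ) - (D.c k : ℕ))

noncomputable def Oden (D : IntervalData n t) : Polynomial ℤ :=
  ∏ p : Fin t × Fin t,
    if Cov D p.1 p.2 then
      if D.c p.1 < D.c p.2 then qFact ((D.d p.1 : ℕ) - (D.c p.2 : ℕ))
      else qFact ((D.d p.2 : ℕ) - (D.c p.1 : ℕ))
    else 1

/-- The rational function `O(F)`, an element of the fraction field of `ℤ[q]`. -/
noncomputable def OF (D : IntervalData n t) : FractionRing (Polynomial ℤ) :=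
  if Connected D then
    algebraMap (Polynomial ℤ) (FractionRing (Polynomial ℤ)) (Onum D) /
      algebraMap (Polynomial ℤ) (FractionRing (Polynomial ℤ)) (Oden D)
  else 0

/-- Cycle type of a permutation, as a partition of `n` (including fixed points). -/
noncomputable def fullCycleType (v : Equiv.Perm (Fin n)) : Multiset ℕ :=
  v.cycleType + Multiset.replicate (n - v.support.card) 1

/-- `z_λ = 1^{α_1} 2^{α_2} ⋯ α_1! α_2! ⋯`. -/
noncomputable def zPart (lam : List ℕ) : ℕ :=
  lam.prod * ∏ i ∈ lam.toFinset, (lam.count i).factorial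

/-- `rinv (U(u, π))` where the one-rowed tableau `U(u,π)` lists the paths
`fam (u 0), fam (u 1), …` whose sinks are `v 0, v 1, …`. -/
def rinvU (D : IntervalData n t) (fam : Fin n → List (V n t))
    (u v : Equiv.Perm (Fin n)) : ℕ :=
  Set.ncard {p : Fin n × Fin n | p.1 < p.2 ∧
    (∃ x, x ∈ fam (u p.1) ∧ x ∈ fam (u p.2)) ∧ v p.2 < v p.1}

/-- Edges of the restricted network `F|_S`, the union of the
source-`i`-to-sink-`i` paths for `i ∈ S`. -/
def REdge (D : IntervalData n t) (S : Finset (Fin n)) (x y : V n t) : Prop :=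
  Edge D x y ∧ ∃ i ∈ S, ∃ p, IsPathFromTo D p i i ∧ [x, y] <:+: p

/-- A cylindrical one-rowed tableau of the restricted network `F|_S`. -/
structure SubRowTab (D : IntervalData n t) (S : Finset (Fin n)) : Type where
  row : List (Fin n)
  nodup : row.Nodup
  content : row.toFinset = S
  fam : Fin n → List (V n t)
  isPath : ∀ m : Fin row.length,
    PathIn (REdge D S) (fam (row.get m)) (V.src (row.get m))
      (V.snk (row.get ⟨((m : ℕ) + 1) % row.length, Nat.mod_lt _ m.pos⟩))
  covers : ∀ x y, REdge D S x y → ∃ a ∈ row, [x, y] <:+: fam a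

/-- Inversions of a one-rowed subnetwork tableau. -/
def SubRowTab.Inv {D : IntervalData n t} {S : Finset (Fin n)}
    (W : SubRowTab D S) : ℕ :=
  Set.ncard {p : Fin W.row.length × Fin W.row.length | p.1 < p.2 ∧
    (∃ x, x ∈ W.fam (W.row.get p.1) ∧ x ∈ W.fam (W.row.get p.2)) ∧
    W.row.get p.2 < W.row.get p.1}

def SubRowTab.LeftAnchored {D : IntervalData n t} {S : Finset (Fin n)}
    (W : SubRowTab D S) : Prop :=
  ∀ a : Fin n, W.row.head? = some a → ∀ b ∈ W.row, a ≤ b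

/-- The concatenation `V(F,I)_1 ∘ ⋯ ∘ V(F,I)_r` of the rows of the tableau
`V(F,I)`, as a list of source indices: each block `I j` in increasing order. -/
def Vlist {r : ℕ} (I : Fin r → Finset (Fin n)) : List (Fin n) :=
  (List.finRange r).flatMap fun j => (I j).sort (· ≤ ·)

/-- Inversions of a list of indices, filled with the type-`e` path family. -/
def invListE (D : IntervalData n t) (l : List (Fin n)) : ℕ :=
  Set.ncard {p : Fin l.length × Fin l.length | p.1 < p.2 ∧
    PathsIntersect D (l.get p.1) (l.get p.2) ∧ l.get p.2 < l.get p.1}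





variable (v : Equiv.Perm (Fin n))

noncomputable abbrev per (x : Fin n) : ℕ := Function.minimalPeriod ⇑v x

lemma mem_pp (x : Fin n) : x ∈ Function.periodicPts ⇑v :=
  ⟨orderOf v, orderOf_pos v, by
    rw [Function.IsPeriodicPt, Function.IsFixedPt, ← Equiv.Perm.coe_pow, pow_orderOf_eq_one]; rfl⟩

lemma per_pos (x : Fin n) : 0 < per v x :=
  Function.minimalPeriod_pos_of_mem_periodicPts (mem_pp v x)

lemma pow_apply (m : ℕ) (x : Fin n) : (v ^ m) x = (⇑v)^[m] x := by
  rw [Equiv.Perm.coe_pow]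

lemma pow_per_apply (x : Fin n) : (v ^ per v x) x = x := by
  rw [pow_apply]; exact Function.iterate_minimalPeriod

lemma per_pow_apply (m : ℕ) (x : Fin n) : per v ((v ^ m) x) = per v x := by
  rw [pow_apply]; exact Function.minimalPeriod_apply_iterate (mem_pp v x) m

lemma pow_mod_per (i : ℕ) (x : Fin n) : (v ^ (i % per v x)) x = (v ^ i) x := by
  rw [pow_apply, pow_apply]
  exact (Function.isPeriodicPt_minimalPeriod ⇑v x).iterate_mod_apply i

lemma pow_inj_lt {x : Fin n} {a b : ℕ} (ha : a < per v x) (hb : b < per v x)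
    (h : (v ^ a) x = (v ^ b) x) : a = b := by
  apply Function.iterate_injOn_Iio_minimalPeriod ha hb
  simpa only [← pow_apply] using h

noncomputable def orbitList (x : Fin n) : List (Fin n) :=
  (List.range (per v x)).map fun m => (v ^ m) x

lemma orbitList_length (x : Fin n) : (orbitList v x).length = per v x := by
  simp [orbitList]

lemma orbitList_ne_nil (x : Fin n) : orbitList v x ≠ [] := by
  have := per_pos v x
  simp [orbitList, List.range_eq_nil]; omega

lemma orbitList_getElem (x : Fin n) (i : ℕ) (hi : i < (orbitList v x).length) :
    (orbitList v x)[i] = (v ^ i) x := by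
  simp [orbitList]

lemma orbitList_head (x : Fin n) : (orbitList v x).head (orbitList_ne_nil v x) = x := by
  rw [List.head_eq_getElem_zero, orbitList_getElem, pow_zero]; rfl

lemma orbitList_nodup (x : Fin n) : (orbitList v x).Nodup := by
  rw [List.nodup_iff_injective_getElem]
  rintro ⟨a, ha⟩ ⟨b, hb⟩ h
  simp only [orbitList_getElem] at h
  rw [orbitList_length] at ha hb
  exact Fin.ext (pow_inj_lt v ha hb h)

lemma mem_orbitList_iff {x y : Fin n} : y ∈ orbitList v x ↔ v.SameCycle x y := by
  constructor
  · rintro h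
    simp only [orbitList, List.mem_map, List.mem_range] at h
    obtain ⟨m, -, rfl⟩ := h
    exact ⟨m, by rw [zpow_natCast]⟩
  · intro h
    obtain ⟨i, -, -, hi⟩ := h.exists_pow_eq v
    simp only [orbitList, List.mem_map, List.mem_range]
    exact ⟨i % per v x, Nat.mod_lt _ (per_pos v x), by rw [pow_mod_per]; exact hi⟩

lemma sameCycle_iff_exists_lt {x y : Fin n} :
    v.SameCycle x y ↔ ∃ m < per v x, (v ^ m) x = y := by
  rw [← mem_orbitList_iff]
  simp [orbitList, eq_comm]

lemma per_sameCycle {x y : Fin n} (h : v.SameCycle x y) : per v x = per v y := by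
  rw [sameCycle_iff_exists_lt] at h
  obtain ⟨m, -, rfl⟩ := h
  rw [per_pow_apply]

lemma orbitList_rotate (x : Fin n) :
    (orbitList v x).map ⇑v = (orbitList v x).rotate 1 := by
  apply List.ext_getElem
  · simp
  intro i h1 h2
  rw [List.getElem_map, List.getElem_rotate, orbitList_getElem, orbitList_getElem,
    orbitList_length, pow_mod_per, ← Equiv.Perm.mul_apply, ← pow_succ']

lemma row_char {r : List (Fin n)} (hnd : r.Nodup) (hne : r ≠ [])
    (hcyl : r.map ⇑v = r.rotate 1) :
    r.length = per v (r.head hne) ∧ r = orbitList v (r.head hne) := by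
  set a := r.head hne with ha
  have hL : 0 < r.length := List.length_pos_iff.2 hne
  have hstep : ∀ i : ℕ, ∀ h : i < r.length, v (r[i]'h) = r[(i + 1) % r.length]'(Nat.mod_lt _ hL) := by
    intro i h
    have h1 : i < (r.map ⇑v).length := by simpa using h
    have := List.getElem_of_eq hcyl h1
    rwa [List.getElem_map, List.getElem_rotate] at this
  have key : ∀ m : ℕ, ∀ hm : m < r.length, r[m]'hm = (v ^ m) a := by
    intro m
    induction m with
    | zero => intro hm; rw [pow_zero, ha, List.head_eq_getElem_zero]; rfl
    | succ m ih =>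
      intro hm
      have hm' : m < r.length := Nat.lt_of_succ_lt hm
      have h2 := hstep m hm'
      rw [ih hm'] at h2
      have h3 : r[(m + 1) % r.length]'(Nat.mod_lt _ hL) = r[m+1]'hm := by
        congr 1
        exact Nat.mod_eq_of_lt hm
      rw [← h3, ← h2, pow_succ', Equiv.Perm.mul_apply]
  have hper : (v ^ r.length) a = a := by
    have h1 : r.length - 1 < r.length := by omega
    have := hstep (r.length - 1) h1
    rw [key _ h1] at this
    have hmod : (r.length - 1 + 1) % r.length = 0 := by
      have h2 : r.length - 1 + 1 = r.length := by omega
      rw [h2, Nat.mod_self]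
    have h0 : r[0]'hL = a := by rw [ha, List.head_eq_getElem_zero]
    have hv : v ((v ^ (r.length - 1)) a) = a := by
      rw [this]
      simp only [hmod]
      exact h0
    calc (v ^ r.length) a = v ((v ^ (r.length - 1)) a) := by
          rw [← Equiv.Perm.mul_apply, ← pow_succ']
          congr 2
          omega
      _ = a := hv
  have hdvd : per v a ∣ r.length := by
    apply Function.IsPeriodicPt.minimalPeriod_dvd
    rw [Function.IsPeriodicPt, Function.IsFixedPt, ← pow_apply]
    exact hper
  have heq : r.length = per v a := by
    rcases Nat.lt_or_ge (per v a) r.length with hlt | hge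
    · exfalso
      have h1 : r[per v a]'hlt = (v ^ per v a) a := key _ _
      have h2 : r[0]'hL = a := by rw [ha, List.head_eq_getElem_zero]
      rw [pow_per_apply] at h1
      have hinj := List.nodup_iff_injective_getElem.1 hnd
        (a₁ := ⟨per v a, hlt⟩) (a₂ := ⟨0, hL⟩) (by simpa using h1.trans h2.symm)
      have h3 : per v a = 0 := by simpa using hinj
      exact absurd h3 (per_pos v a).ne'
    · have hle := Nat.le_of_dvd hL hdvd
      omega
  refine ⟨heq, ?_⟩
  apply List.ext_getElem
  · rw [orbitList_length, heq]
  intro i h1 h2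
  rw [key i h1, orbitList_getElem]



lemma per_eq_one_iff {x : Fin n} : per v x = 1 ↔ v x = x :=
  Function.minimalPeriod_eq_one_iff_isFixedPt

lemma mem_support_iff_per {x : Fin n} : x ∈ v.support ↔ 2 ≤ per v x := by
  rw [Equiv.Perm.mem_support]
  have h1 := per_pos v x
  constructor
  · intro h
    rcases Nat.lt_or_ge (per v x) 2 with h2 | h2
    · have h3 : per v x = 1 := by omega
      exact absurd ((per_eq_one_iff v).1 h3) h
    · exact h2
  · intro h2 hfix
    have := (per_eq_one_iff v).2 hfix
    omega

lemma support_cycleOf_card {x : Fin n} (hx : x ∈ v.support) :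
    (v.cycleOf x).support.card = per v x := by
  have hset : (v.cycleOf x).support = (orbitList v x).toFinset := by
    ext y
    rw [Equiv.Perm.mem_support_cycleOf_iff, List.mem_toFinset, mem_orbitList_iff]
    exact ⟨fun h => h.1, fun h => ⟨h, hx⟩⟩
  rw [hset, List.toFinset_card_of_nodup (orbitList_nodup v x), orbitList_length]

lemma perCount (k : ℕ) :
    (Finset.univ.filter fun x : Fin n => per v x = k).card = k * Multiset.count k (fullCycleType v) := by
  rcases Nat.lt_or_ge k 2 with hk | hk
  · interval_cases k
    · rw [zero_mul, Finset.card_eq_zero, Finset.filter_eq_empty_iff]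
      intro x _
      exact (per_pos v x).ne'
    · rw [one_mul]
      have h1 : (Finset.univ.filter fun x : Fin n => per v x = 1) = v.supportᶜ := by
        ext x
        simp [per_eq_one_iff, Equiv.Perm.mem_support, Function.IsFixedPt]
      rw [h1, Finset.card_compl]
      have h2 : Multiset.count 1 v.cycleType = 0 := by
        rw [Multiset.count_eq_zero]
        intro h
        have := Equiv.Perm.two_le_of_mem_cycleType h
        omega
      simp [fullCycleType, h2]
  · -- k ≥ 2
    classical
    set S := Finset.univ.filter fun x : Fin n => per v x = k with hS
    set T := v.cycleFactorsFinset.filter fun c => c.support.card = k with hT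
    have hmem : ∀ x ∈ S, v.cycleOf x ∈ T := by
      intro x hx
      rw [hS, Finset.mem_filter] at hx
      have hsupp : x ∈ v.support := (mem_support_iff_per v).2 (hx.2 ▸ hk)
      rw [hT, Finset.mem_filter]
      exact ⟨Equiv.Perm.cycleOf_mem_cycleFactorsFinset_iff.2 hsupp,
        by rw [support_cycleOf_card v hsupp, hx.2]⟩
    rw [Finset.card_eq_sum_card_fiberwise hmem]
    have hfib : ∀ c ∈ T, (S.filter fun x => v.cycleOf x = c) = c.support := by
      intro c hc
      rw [hT, Finset.mem_filter] at hc
      ext x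
      rw [Finset.mem_filter, hS, Finset.mem_filter]
      constructor
      · rintro ⟨⟨-, hper⟩, rfl⟩
        have hsupp : x ∈ v.support := (mem_support_iff_per v).2 (hper ▸ hk)
        exact Equiv.Perm.mem_support_cycleOf_iff.2 ⟨Equiv.Perm.SameCycle.refl v x, hsupp⟩
      · intro hx
        have hcx : c = v.cycleOf x := Equiv.Perm.cycle_is_cycleOf hx hc.1
        have hsupp : x ∈ v.support := by
          rw [Equiv.Perm.mem_cycleFactorsFinset_iff] at hc
          rw [Equiv.Perm.mem_support, ← hc.1.2 x hx]
          rw [Equiv.Perm.mem_support] at hx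
          exact hx
        refine ⟨⟨Finset.mem_univ x, ?_⟩, hcx.symm⟩
        rw [← support_cycleOf_card v hsupp, ← hcx, hc.2]
    have hsum : ∑ c ∈ T, (S.filter fun x => v.cycleOf x = c).card = ∑ c ∈ T, k := by
      apply Finset.sum_congr rfl
      intro c hc
      rw [hfib c hc]
      rw [hT, Finset.mem_filter] at hc
      exact hc.2
    rw [hsum, Finset.sum_const, smul_eq_mul, mul_comm]
    congr 1
    have hrep : Multiset.count k (Multiset.replicate (n - v.support.card) 1) = 0 := by
      rw [Multiset.count_replicate]
      simp only [ite_eq_right_iff]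
      omega
    rw [fullCycleType, Multiset.count_add, hrep, add_zero, Equiv.Perm.cycleType_def, Multiset.count_map]
    have hfe : Multiset.filter (fun c => k = (Finset.card ∘ Equiv.Perm.support) c)
        v.cycleFactorsFinset.val
        = Multiset.filter (fun c => c.support.card = k) v.cycleFactorsFinset.val :=
      Multiset.filter_congr (fun c _ => by simp [eq_comm])
    rw [hfe, hT, Finset.card_def, Finset.filter_val]


def IsRep (x : Fin n) : Prop := ∀ y, v.SameCycle x y → x ≤ y

lemma orbit_finset_congr {x y : Fin n} (h : v.SameCycle x y) :
    (orbitList v x).toFinset = (orbitList v y).toFinset := by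
  ext z
  rw [List.mem_toFinset, List.mem_toFinset, mem_orbitList_iff, mem_orbitList_iff]
  exact ⟨fun hz => h.symm.trans hz, fun hz => h.trans hz⟩

noncomputable def repOf (x : Fin n) : Fin n :=
  ((orbitList v x).toFinset).min' ⟨x, by rw [List.mem_toFinset, mem_orbitList_iff]⟩

lemma sameCycle_repOf (x : Fin n) : v.SameCycle x (repOf v x) := by
  have := Finset.min'_mem ((orbitList v x).toFinset)
    ⟨x, by rw [List.mem_toFinset, mem_orbitList_iff]⟩
  rwa [List.mem_toFinset, mem_orbitList_iff] at this

lemma isRep_repOf (x : Fin n) : IsRep v (repOf v x) := by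
  intro y hy
  have hxy : v.SameCycle x y := (sameCycle_repOf v x).trans hy
  exact Finset.min'_le _ y (by rw [List.mem_toFinset, mem_orbitList_iff]; exact hxy)

lemma repOf_congr {x y : Fin n} (h : v.SameCycle x y) : repOf v x = repOf v y := by
  unfold repOf
  congr 1
  exact orbit_finset_congr v h

lemma repOf_eq_of_isRep {x : Fin n} (h : IsRep v x) : repOf v x = x := by
  apply _root_.le_antisymm
  · exact Finset.min'_le _ x (by rw [List.mem_toFinset, mem_orbitList_iff])
  · exact h _ (sameCycle_repOf v x)

lemma isRep_eq_of_sameCycle {x y : Fin n} (hx : IsRep v x) (hy : IsRep v y)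
    (h : v.SameCycle x y) : x = y :=
  _root_.le_antisymm (hx y h) (hy x h.symm)

lemma per_repOf (x : Fin n) : per v (repOf v x) = per v x :=
  (per_sameCycle v (sameCycle_repOf v x)).symm

lemma repCount (k : ℕ) :
    (Finset.univ.filter fun x : Fin n => IsRep v x ∧ per v x = k).card * k
      = (Finset.univ.filter fun x : Fin n => per v x = k).card := by
  classical
  set S := Finset.univ.filter fun x : Fin n => per v x = k with hS
  set R := Finset.univ.filter fun x : Fin n => IsRep v x ∧ per v x = k with hR
  have hmem : ∀ x ∈ S, repOf v x ∈ R := by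
    intro x hx
    rw [hS, Finset.mem_filter] at hx
    rw [hR, Finset.mem_filter]
    exact ⟨Finset.mem_univ _, isRep_repOf v x, by rw [per_repOf]; exact hx.2⟩
  rw [Finset.card_eq_sum_card_fiberwise hmem (t := R)]
  have hfib : ∀ b ∈ R, (S.filter fun x => repOf v x = b) = (orbitList v b).toFinset := by
    intro b hb
    rw [hR, Finset.mem_filter] at hb
    ext x
    rw [Finset.mem_filter, hS, Finset.mem_filter, List.mem_toFinset, mem_orbitList_iff]
    constructor
    · rintro ⟨⟨-, hper⟩, hrep⟩
      exact (hrep ▸ sameCycle_repOf v x).symm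
    · intro hbx
      refine ⟨⟨Finset.mem_univ _, ?_⟩, ?_⟩
      · rw [← per_sameCycle v hbx, hb.2.2]
      · rw [repOf_congr v hbx.symm, repOf_eq_of_isRep v hb.2.1]
  have : ∑ b ∈ R, (S.filter fun x => repOf v x = b).card = ∑ b ∈ R, k := by
    apply Finset.sum_congr rfl
    intro b hb
    rw [hfib b hb, List.toFinset_card_of_nodup (orbitList_nodup v b), orbitList_length]
    rw [hR, Finset.mem_filter] at hb
    exact hb.2.2
  rw [this, Finset.sum_const, smul_eq_mul]


lemma posCount (l : List ℕ) (k : ℕ) :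
    Fintype.card {j : Fin l.length // l.get j = k} = l.count k := by
  classical
  rw [Fintype.card_subtype]
  have h1 : (Finset.univ.val.map l.get : Multiset ℕ) = ↑l := by
    rw [Fin.univ_val_map, List.ofFn_get]
  have h2 : l.count k = Multiset.count k (↑l : Multiset ℕ) := by
    simp
  rw [h2, ← h1, Multiset.count_map]
  rw [Finset.card_def, Finset.filter_val]
  congr 1
  exact Multiset.filter_congr (fun j _ => by rw [eq_comm])

lemma cardE {α β : Type*} [Fintype α] [Fintype β] (f : α → ℕ) (g : β → ℕ) (s : Finset ℕ)
    (hs : ∀ x, f x ∈ s)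
    (h : ∀ k ∈ s, Fintype.card {x : α // f x = k} = Fintype.card {y : β // g y = k}) :
    Nat.card {e : α → β // Function.Injective e ∧ ∀ x, g (e x) = f x}
      = ∏ k ∈ s, (Fintype.card {x : α // f x = k}).factorial := by
  classical
  have E : {e : α → β // Function.Injective e ∧ ∀ x, g (e x) = f x}
      ≃ ∀ k : {k // k ∈ s}, {x : α // f x = (k : ℕ)} ≃ {y : β // g y = (k : ℕ)} := by
    refine
      { toFun := fun e k => Equiv.ofBijective
          (fun x => (⟨e.1 x.1, by rw [e.2.2]; exact x.2⟩ : {y : β // g y = (k : ℕ)}))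
          ?_
        invFun := fun E =>
          ⟨fun x => (E ⟨f x, hs x⟩ ⟨x, rfl⟩).1, ?_, fun x => (E ⟨f x, hs x⟩ ⟨x, rfl⟩).2⟩
        left_inv := ?_
        right_inv := ?_ }
    · rw [Fintype.bijective_iff_injective_and_card]
      constructor
      · intro x1 x2 hx
        exact Subtype.ext (e.2.1 (Subtype.mk.injEq .. ▸ hx))
      · exact h _ k.2
    · intro x1 x2 hx
      simp only at hx
      have key : ∀ (k : {k // k ∈ s}) (x : α) (hxk : f x = ↑k),
          ((E ⟨f x, hs x⟩) ⟨x, rfl⟩).1 = ((E k) ⟨x, hxk⟩).1 := by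
        rintro ⟨k, hk⟩ x hxk
        simp only at hxk
        subst hxk
        rfl
      have h1 : g ((E ⟨f x1, hs x1⟩ ⟨x1, rfl⟩).1) = f x1 := (E ⟨f x1, hs x1⟩ ⟨x1, rfl⟩).2
      have h2 : g ((E ⟨f x2, hs x2⟩ ⟨x2, rfl⟩).1) = f x2 := (E ⟨f x2, hs x2⟩ ⟨x2, rfl⟩).2
      have hf : f x1 = f x2 := by rw [← h1, ← h2]; exact congrArg g hx
      rw [key ⟨f x2, hs x2⟩ x1 hf, key ⟨f x2, hs x2⟩ x2 rfl] at hx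
      have := (E ⟨f x2, hs x2⟩).injective (a₁ := ⟨x1, hf⟩) (a₂ := ⟨x2, rfl⟩)
        (Subtype.ext hx)
      simpa using this
    · intro e
      apply Subtype.ext
      funext x
      rfl
    · intro E
      have key : ∀ (k : {k // k ∈ s}) (x : α) (hxk : f x = ↑k),
          ((E ⟨f x, hs x⟩) ⟨x, rfl⟩).1 = ((E k) ⟨x, hxk⟩).1 := by
        rintro ⟨k, hk⟩ x hxk
        simp only at hxk
        subst hxk
        rfl
      funext k
      apply Equiv.ext
      rintro ⟨x, hx⟩
      exact Subtype.ext (key k x hx)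
  rw [Nat.card_congr E, Nat.card_pi]
  rw [← Finset.prod_coe_sort s fun k => (Fintype.card {x : α // f x = k}).factorial]
  apply Finset.prod_congr rfl
  intro k _
  rw [Nat.card_eq_fintype_card, Fintype.card_equiv (Fintype.equivOfCardEq (h _ k.2))]


variable (lam : List ℕ)

/-- selectors: one starting point in each cycle, matching the shape -/
def AT (v : Equiv.Perm (Fin n)) (lam : List ℕ) : Type :=
  {a : Fin lam.length → Fin n //
    (∀ j, per v (a j) = lam.get j) ∧ ∀ j1 j2, v.SameCycle (a j1) (a j2) → j1 = j2}

lemma sameCycle_pow_self (x : Fin n) (m : ℕ) : v.SameCycle x ((v ^ m) x) :=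
  ⟨m, by rw [zpow_natCast]⟩

lemma cardA (v : Equiv.Perm (Fin n)) (hpos : ∀ x ∈ lam, 0 < x)
    (hfullCycleType : fullCycleType v = (↑lam : Multiset ℕ)) :
    Nat.card (AT v lam)
      = lam.prod * ∏ k ∈ lam.toFinset, (lam.count k).factorial := by
  classical
  have repCount' : ∀ k, (Finset.univ.filter fun x : Fin n => IsRep v x ∧ per v x = k).card
      = lam.count k := by
    intro k
    rcases Nat.eq_zero_or_pos k with rfl | hk
    · have hc0 : lam.count 0 = 0 := by
        rw [List.count_eq_zero]
        intro h
        exact absurd (hpos 0 h) (lt_irrefl 0)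
      rw [hc0, Finset.card_eq_zero, Finset.filter_eq_empty_iff]
      intro x _
      rintro ⟨-, hp⟩
      exact (per_pos v x).ne' hp
    · have h1 := repCount v k
      rw [perCount, hfullCycleType, Multiset.coe_count] at h1
      rw [mul_comm] at h1
      exact Nat.eq_of_mul_eq_mul_left hk h1
  set B := {e : Fin lam.length → {x : Fin n // IsRep v x} //
    Function.Injective e ∧ ∀ j, per v (e j).1 = lam.get j} with hB
  have hcardB : Nat.card B = ∏ k ∈ lam.toFinset, (lam.count k).factorial := by
    have := cardE (fun j : Fin lam.length => lam.get j)
      (fun y : {x : Fin n // IsRep v x} => per v y.1) lam.toFinset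
      (fun j => by rw [List.mem_toFinset]; exact List.get_mem lam j)
      (fun k hk => by
        have h2 : Fintype.card {y : {x : Fin n // IsRep v x} // per v y.1 = k}
            = (Finset.univ.filter fun x : Fin n => IsRep v x ∧ per v x = k).card := by
          rw [Fintype.card_congr
            (Equiv.subtypeSubtypeEquivSubtypeInter (IsRep v) (fun x => per v x = k)),
            Fintype.card_subtype]
        exact (posCount lam k).trans ((repCount' k).symm.trans h2.symm))
    rw [hB, this]
    exact Finset.prod_congr rfl fun k _ => by rw [posCount]
  -- the bijection  B × shifts ≃ AT
  have Φbij : Function.Bijective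
      (fun p : B × (∀ j : Fin lam.length, Fin (lam.get j)) =>
        (⟨fun j => (v ^ ((p.2 j : ℕ))) (p.1.1 j).1,
          fun j => by rw [per_pow_apply]; exact p.1.2.2 j,
          fun j1 j2 hsc => by
            have h1 : v.SameCycle ((p.1.1 j1) : Fin n) ((p.1.1 j2) : Fin n) :=
              ((sameCycle_pow_self v _ (p.2 j1 : ℕ)).trans hsc).trans
                (sameCycle_pow_self v _ (p.2 j2 : ℕ)).symm
            have h2 : (p.1.1 j1 : Fin n) = p.1.1 j2 :=
              isRep_eq_of_sameCycle v (p.1.1 j1).2 (p.1.1 j2).2 h1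
            exact p.1.2.1 (Subtype.ext h2)⟩ : AT v lam)) := by
    constructor
    · rintro ⟨⟨e, he1, he2⟩, s⟩ ⟨⟨e', he1', he2'⟩, s'⟩ h
      have hval := congrArg Subtype.val h
      simp only at hval
      have hj : ∀ j, (v ^ ((s j : ℕ))) (e j).1 = (v ^ ((s' j : ℕ))) (e' j).1 :=
        fun j => congrFun hval j
      have hee : e = e' := by
        funext j
        apply Subtype.ext
        apply isRep_eq_of_sameCycle v (e j).2 (e' j).2
        exact ((sameCycle_pow_self v _ (s j : ℕ)).trans (hj j ▸ Equiv.Perm.SameCycle.refl v _)).trans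
          (sameCycle_pow_self v _ (s' j : ℕ)).symm
      subst hee
      have hss : s = s' := by
        funext j
        have hlt : (s j : ℕ) < per v (e j).1 := by rw [he2 j]; exact (s j).2
        have hlt' : (s' j : ℕ) < per v (e j).1 := by rw [he2 j]; exact (s' j).2
        exact Fin.ext (pow_inj_lt v hlt hlt' (hj j))
      rw [hss]
    · rintro ⟨a, ha1, ha2⟩
      have hrep : ∀ j, v.SameCycle (repOf v (a j)) (a j) := fun j => (sameCycle_repOf v (a j)).symm
      have hex : ∀ j, ∃ m < per v (repOf v (a j)), (v ^ m) (repOf v (a j)) = a j := by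
        intro j
        exact (sameCycle_iff_exists_lt v).1 (hrep j)
      choose m hm1 hm2 using hex
      have hperrep : ∀ j, per v (repOf v (a j)) = lam.get j := by
        intro j
        rw [per_repOf]
        exact ha1 j
      refine ⟨⟨⟨fun j => ⟨repOf v (a j), isRep_repOf v (a j)⟩, ?_, fun j => hperrep j⟩,
        fun j => ⟨m j, by rw [← hperrep j]; exact hm1 j⟩⟩, ?_⟩
      · intro j1 j2 hj
        apply ha2
        have := congrArg Subtype.val hj
        simp only at this
        exact ((sameCycle_repOf v (a j1)).trans (this ▸ Equiv.Perm.SameCycle.refl v _)).trans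
          (hrep j2)
      · apply Subtype.ext
        funext j
        exact hm2 j
  rw [show (Nat.card (AT v lam))
      = Nat.card (B × (∀ j : Fin lam.length, Fin (lam.get j))) from
    (Nat.card_congr (Equiv.ofBijective _ Φbij)).symm]
  rw [Nat.card_prod, Nat.card_pi, hcardB]
  have hprod : ∏ j : Fin lam.length, Nat.card (Fin (lam.get j)) = lam.prod := by
    have : ∀ j : Fin lam.length, Nat.card (Fin (lam.get j)) = lam.get j := fun j => by
      simp
    rw [Finset.prod_congr rfl fun j _ => this j]
    rw [← List.prod_ofFn (f := fun j => lam.get j), List.ofFn_get]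
  rw [hprod, mul_comm]


def RowsT (v : Equiv.Perm (Fin n)) (lam : List ℕ) : Type :=
  {rows : List (List (Fin n)) // rows.map List.length = lam ∧ rows.flatten.Nodup ∧
    (∀ i : Fin n, i ∈ rows.flatten) ∧ ∀ r ∈ rows, r.map ⇑v = r.rotate 1}

lemma sum_ite_len (L : List ℕ) (k : ℕ) :
    (L.map fun m => if m = k then m else 0).sum = k * L.count k := by
  induction L with
  | nil => simp
  | cons a t ih =>
    rw [List.map_cons, List.sum_cons, ih, List.count_cons]
    rcases eq_or_ne a k with rfl | hne
    · simp [mul_add]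
      omega
    · simp [hne, Ne.symm hne]

lemma rows_length {v : Equiv.Perm (Fin n)} (R : RowsT v lam) : R.1.length = lam.length := by
  have := congrArg List.length R.2.1
  simpa using this

lemma rows_row_nodup {v : Equiv.Perm (Fin n)} (R : RowsT v lam) {r : List (Fin n)}
    (hr : r ∈ R.1) : r.Nodup :=
  (List.nodup_flatten.1 R.2.2.1).1 r hr

lemma rows_row_ne_nil {v : Equiv.Perm (Fin n)} (hpos : ∀ x ∈ lam, 0 < x)
    (R : RowsT v lam) {r : List (Fin n)} (hr : r ∈ R.1) : r ≠ [] := by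
  have : r.length ∈ lam := by
    rw [← R.2.1]
    exact List.mem_map_of_mem (f := List.length) hr
  have := hpos _ this
  intro hnil
  rw [hnil] at this
  simp at this

/-- each row is the orbit of its head -/
lemma rows_row_eq {v : Equiv.Perm (Fin n)} (hpos : ∀ x ∈ lam, 0 < x)
    (R : RowsT v lam) {r : List (Fin n)} (hr : r ∈ R.1) :
    r.length = per v (r.head (rows_row_ne_nil lam hpos R hr)) ∧
      r = orbitList v (r.head (rows_row_ne_nil lam hpos R hr)) :=
  row_char v (rows_row_nodup lam R hr) _ (R.2.2.2.2 r hr)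

lemma rows_mem_per {v : Equiv.Perm (Fin n)} (hpos : ∀ x ∈ lam, 0 < x)
    (R : RowsT v lam) {r : List (Fin n)} (hr : r ∈ R.1) {x : Fin n} (hx : x ∈ r) :
    per v x = r.length := by
  obtain ⟨h1, h2⟩ := rows_row_eq lam hpos R hr
  rw [h2, mem_orbitList_iff] at hx
  rw [← per_sameCycle v hx, ← h1]

lemma perCount_rows {v : Equiv.Perm (Fin n)} (hpos : ∀ x ∈ lam, 0 < x)
    (R : RowsT v lam) (k : ℕ) :
    (Finset.univ.filter fun x : Fin n => per v x = k).card = k * lam.count k := by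
  classical
  set p : Fin n → Bool := fun x => decide (per v x = k) with hp
  have huniv : (Finset.univ : Finset (Fin n)) = R.1.flatten.toFinset := by
    apply Finset.eq_univ_iff_forall.2 (fun x => List.mem_toFinset.2 (R.2.2.2.1 x)) |>.symm
  have e1 : (R.1.flatten.toFinset.filter fun x => per v x = k)
      = (R.1.flatten.filter p).toFinset := by
    rw [List.toFinset_filter]
    apply Finset.filter_congr
    intro x _
    simp [hp]
  have h1 : (Finset.univ.filter fun x : Fin n => per v x = k).card = R.1.flatten.countP p := by
    rw [huniv, e1, List.toFinset_card_of_nodup (R.2.2.1.filter p),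
      ← List.countP_eq_length_filter]
  rw [h1, List.countP_flatten]
  have h2 : R.1.map (List.countP p) = R.1.map fun r => if r.length = k then r.length else 0 := by
    apply List.map_congr_left
    intro r hr
    rcases eq_or_ne r.length k with hk | hk
    · rw [if_pos hk]
      subst hk
      apply List.countP_eq_length.2
      intro x hx
      rw [hp]
      simp only [decide_eq_true_eq]
      exact rows_mem_per lam hpos R hr hx
    · rw [if_neg hk, List.countP_eq_zero.2 ?_]
      intro x hx
      rw [hp]
      simp only [decide_eq_true_eq]
      intro hxk
      exact hk (by rw [← hxk, rows_mem_per lam hpos R hr hx])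
  rw [h2, show (fun r : List (Fin n) => if r.length = k then r.length else 0)
    = ((fun m => if m = k then m else 0) ∘ List.length) from rfl,
    ← List.map_map, R.2.1, sum_ite_len]

lemma count_zero_fullCycleType (v : Equiv.Perm (Fin n)) : Multiset.count 0 (fullCycleType v) = 0 := by
  rw [fullCycleType, Multiset.count_add]
  have h1 : Multiset.count 0 v.cycleType = 0 := by
    rw [Multiset.count_eq_zero]
    intro h
    have := Equiv.Perm.two_le_of_mem_cycleType h
    omega
  rw [h1, Multiset.count_replicate]
  simp

lemma fullCycleType_eq_of_perCount {v : Equiv.Perm (Fin n)} (hpos : ∀ x ∈ lam, 0 < x)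
    (h : ∀ k, (Finset.univ.filter fun x : Fin n => per v x = k).card = k * lam.count k) :
    fullCycleType v = (↑lam : Multiset ℕ) := by
  ext k
  rcases Nat.eq_zero_or_pos k with rfl | hk
  · rw [count_zero_fullCycleType]
    symm
    rw [Multiset.coe_count, List.count_eq_zero]
    intro hmem
    exact absurd (hpos 0 hmem) (lt_irrefl 0)
  · have h1 := perCount v k
    have h2 := h k
    rw [Multiset.coe_count]
    apply Nat.eq_of_mul_eq_mul_left hk
    rw [← h1]
    exact h2


lemma rowsT_equiv (v : Equiv.Perm (Fin n)) (hpos : ∀ x ∈ lam, 0 < x) (hsum : lam.sum = n) :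
    Nonempty (AT v lam ≃ RowsT v lam) := by
  classical
  have hshape : ∀ a : AT v lam,
      (List.ofFn fun j => orbitList v (a.1 j)).map List.length = lam := by
    intro a
    rw [List.map_ofFn]
    have hfn : (List.length ∘ fun j => orbitList v (a.1 j)) = fun j => lam.get j :=
      funext fun j => by
        simp only [Function.comp_apply]
        rw [orbitList_length, a.2.1 j]
    rw [hfn, List.ofFn_get]
  have Ψmem : ∀ a : AT v lam,
      (List.ofFn fun j => orbitList v (a.1 j)).map List.length = lam ∧
      (List.ofFn fun j => orbitList v (a.1 j)).flatten.Nodup ∧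
      (∀ i : Fin n, i ∈ (List.ofFn fun j => orbitList v (a.1 j)).flatten) ∧
      ∀ r ∈ (List.ofFn fun j => orbitList v (a.1 j)), r.map ⇑v = r.rotate 1 := by
    intro a
    have hnd : (List.ofFn fun j => orbitList v (a.1 j)).flatten.Nodup := by
      rw [List.nodup_flatten]
      constructor
      · intro l hl
        rw [List.mem_ofFn] at hl
        obtain ⟨j, rfl⟩ := hl
        exact orbitList_nodup v _
      · rw [List.pairwise_ofFn]
        intro i j hij x hxi hxj
        rw [mem_orbitList_iff] at hxi hxj
        exact absurd (a.2.2 i j (hxi.trans hxj.symm)) hij.ne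
    refine ⟨hshape a, hnd, ?_, ?_⟩
    · have hlen : (List.ofFn fun j => orbitList v (a.1 j)).flatten.length = n := by
        rw [List.length_flatten, hshape a, hsum]
      have huniv : (List.ofFn fun j => orbitList v (a.1 j)).flatten.toFinset = Finset.univ := by
        apply Finset.eq_univ_of_card
        rw [List.toFinset_card_of_nodup hnd, hlen]
        simp
      intro x
      rw [← List.mem_toFinset, huniv]
      exact Finset.mem_univ x
    · intro r hr
      rw [List.mem_ofFn] at hr
      obtain ⟨j, rfl⟩ := hr
      exact orbitList_rotate v _
  set Ψ : AT v lam → RowsT v lam :=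
    fun a => ⟨List.ofFn fun j => orbitList v (a.1 j), Ψmem a⟩ with hΨ
  have Ψbij : Function.Bijective Ψ := by
    constructor
    · intro a a' h
      have hval := congrArg Subtype.val h
      rw [hΨ] at hval
      simp only [List.ofFn_inj] at hval
      apply Subtype.ext
      funext j
      have := congrFun hval j
      have h0 : 0 < (orbitList v (a.1 j)).length := by
        rw [orbitList_length]; exact per_pos v _
      have h0' : 0 < (orbitList v (a'.1 j)).length := by
        rw [orbitList_length]; exact per_pos v _
      have hji := List.getElem_of_eq this h0
      rw [orbitList_getElem, orbitList_getElem, pow_zero] at hji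
      simpa using hji
    · intro R
      have hlenR := rows_length lam R
      have hget : ∀ j : Fin lam.length, (j : ℕ) < R.1.length := fun j => by
        rw [hlenR]; exact j.2
      have hmem : ∀ j : Fin lam.length, R.1[(j : ℕ)]'(hget j) ∈ R.1 := fun j =>
        List.getElem_mem _
      set a : Fin lam.length → Fin n :=
        fun j => (R.1[(j : ℕ)]'(hget j)).head (rows_row_ne_nil lam hpos R (hmem j)) with ha
      have hrowlen : ∀ j : Fin lam.length, (R.1[(j : ℕ)]'(hget j)).length = lam.get j := by
        intro j
        have := List.getElem_of_eq R.2.1 (i := (j : ℕ)) (by rw [List.length_map, hlenR]; exact j.2)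
        rw [List.getElem_map] at this
        exact this.trans (by rw [← List.get_eq_getElem])
      have hper : ∀ j, per v (a j) = lam.get j := by
        intro j
        rw [← (rows_row_eq lam hpos R (hmem j)).1, hrowlen]
      have haorb : ∀ j : Fin lam.length, R.1[(j : ℕ)]'(hget j) = orbitList v (a j) := fun j =>
        (rows_row_eq lam hpos R (hmem j)).2
      have hdisj : List.Pairwise List.Disjoint R.1 := (List.nodup_flatten.1 R.2.2.1).2
      have hsc : ∀ j1 j2, v.SameCycle (a j1) (a j2) → j1 = j2 := by
        intro j1 j2 hscc
        by_contra hne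
        have hmem2 : a j2 ∈ R.1[(j2 : ℕ)]'(hget j2) := by
          rw [haorb j2, mem_orbitList_iff]
        have hmem1 : a j2 ∈ R.1[(j1 : ℕ)]'(hget j1) := by
          rw [haorb j1, mem_orbitList_iff]
          exact hscc
        rw [List.pairwise_iff_getElem] at hdisj
        rcases lt_trichotomy (j1 : ℕ) (j2 : ℕ) with hlt | heq | hgt
        · exact hdisj _ _ _ _ hlt hmem1 hmem2
        · exact hne (Fin.ext heq)
        · exact hdisj _ _ _ _ hgt hmem2 hmem1
      refine ⟨⟨a, hper, hsc⟩, ?_⟩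
      apply Subtype.ext
      rw [hΨ]
      apply List.ext_getElem
      · rw [List.length_ofFn, hlenR]
      intro i h1 h2
      rw [List.getElem_ofFn]
      exact (haorb ⟨i, by rwa [List.length_ofFn] at h1⟩).symm
  exact ⟨Equiv.ofBijective Ψ Ψbij⟩


lemma natCard_sigma {ι : Type*} [Fintype ι] (F : ι → Type*) [∀ i, Finite (F i)] :
    Nat.card (Σ i, F i) = ∑ i, Nat.card (F i) := by
  letI : ∀ i, Fintype (F i) := fun i => Fintype.ofFinite _
  rw [Nat.card_eq_fintype_card, Fintype.card_sigma]
  exact Finset.sum_congr rfl fun i _ => (Nat.card_eq_fintype_card).symm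

lemma Tableau.ext'' {D : IntervalData n t} {lam : List ℕ} {U1 U2 : Tableau D lam}
    (hf : U1.fam = U2.fam) (ht : U1.typ = U2.typ) (hr : U1.rows = U2.rows) : U1 = U2 := by
  cases U1; cases U2
  simp only at hf ht hr
  subst hf; subst ht; subst hr
  rfl

/-- the number of cylindrical `F_w`-tableaux of shape `λ`
equals `z_λ` times the number of `v ≤ w` (Bruhat) of cycle type `λ`. -/
theorem statement8 (n t : ℕ) (w : Equiv.Perm (Fin n))
    (h1 : Avoids3412 w) (h2 : Avoids4231 w)
    (D : IntervalData n t) (hD : Represents D w)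
    (lam : List ℕ) (hlam : IsPartition lam n) :
    Nat.card {U : Tableau D lam // U.Cylindrical} =
      zPart lam * Nat.card {v : Equiv.Perm (Fin n) //
        fullCycleType v = (↑lam : Multiset ℕ) ∧ BruhatLE v w} := by
  obtain ⟨hsort, hpos, hsum⟩ := hlam
  classical
  set Sub := {v : Equiv.Perm (Fin n) // fullCycleType v = (↑lam : Multiset ℕ) ∧ BruhatLE v w}
    with hSub
  have E1 : {U : Tableau D lam // U.Cylindrical} ≃ Σ v : Sub, RowsT v.1 lam := by
    refine
      { toFun := fun U =>
          ⟨⟨U.1.typ, ?_, ((hD U.1.typ).1).mp ⟨U.1.fam, U.1.isFam, U.1.covers⟩⟩,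
            ⟨U.1.rows, U.1.shape, U.1.nodup, U.1.complete, U.2⟩⟩
        invFun := fun P =>
          ⟨{ fam := (((hD P.1.1).1).mpr P.1.2.2).choose
             typ := P.1.1
             isFam := (((hD P.1.1).1).mpr P.1.2.2).choose_spec.1
             covers := (((hD P.1.1).1).mpr P.1.2.2).choose_spec.2
             rows := P.2.1
             shape := P.2.2.1
             nodup := P.2.2.2.1
             complete := P.2.2.2.2.1 }, P.2.2.2.2.2⟩
        left_inv := ?_
        right_inv := ?_ }
    · exact fullCycleType_eq_of_perCount lam hpos
        (perCount_rows lam hpos ⟨U.1.rows, U.1.shape, U.1.nodup, U.1.complete, U.2⟩)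
    · rintro ⟨U, hU⟩
      apply Subtype.ext
      apply Tableau.ext''
      · exact (hD U.typ).2 _ _
          (((hD U.typ).1).mpr (((hD U.typ).1).mp ⟨U.fam, U.isFam, U.covers⟩)).choose_spec.1
          (((hD U.typ).1).mpr (((hD U.typ).1).mp ⟨U.fam, U.isFam, U.covers⟩)).choose_spec.2
          U.isFam U.covers
      · rfl
      · rfl
    · rintro ⟨⟨v, hv⟩, R⟩
      rfl
  rw [Nat.card_congr E1]
  haveI : ∀ s : Sub, Finite (AT s.1 lam) := fun s =>
    inferInstanceAs (Finite {a : Fin lam.length → Fin n //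
      (∀ j, per s.1 (a j) = lam.get j) ∧ ∀ j1 j2, (s.1).SameCycle (a j1) (a j2) → j1 = j2})
  have E2 : (Σ v : Sub, RowsT v.1 lam) ≃ Σ v : Sub, AT v.1 lam :=
    Equiv.sigmaCongrRight fun s =>
      (Classical.choice (rowsT_equiv lam s.1 hpos hsum)).symm
  rw [Nat.card_congr E2]
  haveI : Fintype Sub := Fintype.ofFinite _
  rw [natCard_sigma]
  have hconst : ∀ s : Sub, Nat.card (AT s.1 lam)
      = lam.prod * ∏ k ∈ lam.toFinset, (lam.count k).factorial := fun s =>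
    cardA lam s.1 hpos s.2.1
  rw [Finset.sum_congr rfl fun s _ => hconst s, Finset.sum_const, smul_eq_mul,
    Finset.card_univ, ← Nat.card_eq_fintype_card]
  rw [zPart, mul_comm]

end

end ZigZag
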